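/- Let a_1, ..., a_n be non-negative real numbers and define h : 2^[n] → ℝ by h(X) = max{a_i : i ∈ X} (with h(∅) = 0). Then h is a normal polymatroid, i.e., a non-negative linear combination of step functions. -/
import Mathlib


/-- The step function at `W`: `0` on subsets of `W`, `1` otherwise. -/
def stepFn {n : ℕ} (W X : Finset (Fin n)) : ℝ := if X ⊆ W then 0 else 1

/-- A normal polymatroid: a non-negative linear combination of step functions `h_W`, `W ⊊ [n]`. -/
def IsNormal {n : ℕ} (h : Finset (Fin n) → ℝ) : Prop :=
  ∃ c : Finset (Fin n) → ℝ, (∀ W, 0 ≤ c W) ∧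
    ∀ X, h X = ∑ W ∈ Finset.univ.filter (fun W => W ≠ Finset.univ), c W * stepFn W X

lemma sup'_sup_const {n : ℕ} (X : Finset (Fin n)) (hX : X.Nonempty) (a : Fin n → ℝ) (m : ℝ) :
    X.sup' hX (fun i => a i ⊔ m) = X.sup' hX a ⊔ m := by
  apply le_antisymm
  · exact Finset.sup'_le _ _ fun i hi => sup_le_sup_right (Finset.le_sup' a hi) m
  · obtain ⟨j, hj⟩ := hX
    refine sup_le (Finset.sup'_le _ _ fun i hi => ?_) ?_
    · exact le_trans (le_sup_left) (Finset.le_sup' (fun i => a i ⊔ m) hi)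
    · exact le_trans (le_sup_right) (Finset.le_sup' (fun i => a i ⊔ m) hj)

lemma max_is_normal_aux {n : ℕ} : ∀ (k : ℕ) (a : Fin n → ℝ), (∀ i, 0 ≤ a i) →
    (Finset.univ.filter (fun i => a i ≠ 0)).card ≤ k →
    IsNormal (fun X : Finset (Fin n) => if hX : X.Nonempty then X.sup' hX a else 0) := by
  intro k
  induction k with
  | zero =>
    intro a ha hcard
    have hz : ∀ i, a i = 0 := by
      intro i
      by_contra h
      have : i ∈ Finset.univ.filter (fun i => a i ≠ 0) := by simp [h]
      have := Finset.card_pos.mpr ⟨i, this⟩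
      omega
    refine ⟨0, fun _ => le_rfl, fun X => ?_⟩
    simp only [Pi.zero_apply, zero_mul, Finset.sum_const_zero]
    split
    · next hX =>
      apply le_antisymm
      · exact Finset.sup'_le _ _ fun i _ => (hz i).le
      · obtain ⟨j, hj⟩ := hX
        calc (0:ℝ) = a j := (hz j).symm
        _ ≤ _ := Finset.le_sup' a hj
    · rfl
  | succ k ih =>
    intro a ha hcard
    by_cases hS : (Finset.univ.filter (fun i => a i ≠ 0)).Nonempty
    · set S := Finset.univ.filter (fun i => a i ≠ 0) with hSdef
      set m := S.inf' hS a with hm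
      obtain ⟨i₀, hi₀S, hi₀⟩ := Finset.exists_mem_eq_inf' hS a
      have hi₀ne : a i₀ ≠ 0 := (Finset.mem_filter.mp hi₀S).2
      have hmpos : 0 < m := by
        rw [hm, hi₀]
        exact lt_of_le_of_ne (ha i₀) (Ne.symm hi₀ne)
      have hmle : ∀ i, a i ≠ 0 → m ≤ a i := by
        intro i hi
        exact Finset.inf'_le a (by simp [hSdef, hi])
      set a' : Fin n → ℝ := fun i => if a i = 0 then 0 else a i - m with ha'def
      have ha' : ∀ i, 0 ≤ a' i := by
        intro i
        simp only [ha'def]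
        split
        · exact le_rfl
        · next h => linarith [hmle i h]
      have hsub : Finset.univ.filter (fun i => a' i ≠ 0) ⊆ S.erase i₀ := by
        intro i hi
        simp only [Finset.mem_filter, ha'def] at hi
        rcases hi with ⟨-, hi⟩
        by_cases h0 : a i = 0
        · simp [h0] at hi
        · rw [if_neg h0] at hi
          refine Finset.mem_erase.mpr ⟨?_, by simp [hSdef, h0]⟩
          rintro rfl
          rw [← hi₀] at hi
          exact hi (sub_self m)
      have hcard' : (Finset.univ.filter (fun i => a' i ≠ 0)).card ≤ k := by
        have h1 := Finset.card_le_card hsub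
        have h2 : (S.erase i₀).card = S.card - 1 := Finset.card_erase_of_mem hi₀S
        omega
      obtain ⟨c', hc'nn, hc'⟩ := ih a' ha' hcard'
      set Z := Finset.univ.filter (fun i => a i = 0) with hZdef
      have hZne : Z ≠ Finset.univ := by
        intro h
        have : i₀ ∈ Z := h ▸ Finset.mem_univ i₀
        exact hi₀ne (Finset.mem_filter.mp this).2
      refine ⟨fun W => c' W + if W = Z then m else 0, ?_, ?_⟩
      · intro W
        have := hc'nn W
        dsimp only
        split <;> linarith
      · intro X
        dsimp only
        have hc'X := hc' X
        dsimp only at hc'X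
        have key : (if hX : X.Nonempty then X.sup' hX a else 0)
            = (if hX : X.Nonempty then X.sup' hX a' else 0) + m * stepFn Z X := by
          by_cases hX : X.Nonempty
          · rw [dif_pos hX, dif_pos hX]
            by_cases hXZ : X ⊆ Z
            · have hz : ∀ i ∈ X, a i = 0 := fun i hi => (Finset.mem_filter.mp (hXZ hi)).2
              rw [stepFn, if_pos hXZ, mul_zero, add_zero]
              obtain ⟨j, hj⟩ := hX
              have hz' : ∀ i ∈ X, a' i = 0 := by
                intro i hi
                simp [ha'def, hz i hi]
              have h1 : X.sup' ⟨j, hj⟩ a = 0 := le_antisymm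
                (Finset.sup'_le _ _ fun i hi => (hz i hi).le)
                ((hz j hj) ▸ Finset.le_sup' a hj)
              have h2 : X.sup' ⟨j, hj⟩ a' = 0 := le_antisymm
                (Finset.sup'_le _ _ fun i hi => (hz' i hi).le)
                ((hz' j hj) ▸ Finset.le_sup' a' hj)
              rw [h1, h2]
            · rw [stepFn, if_neg hXZ, mul_one]
              obtain ⟨j, hjX, hjZ⟩ := Finset.not_subset.mp hXZ
              have hjne : a j ≠ 0 := by simpa [hZdef] using hjZ
              have heq : ∀ i, a' i + m = a i ⊔ m := by
                intro i
                simp only [ha'def]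
                by_cases h0 : a i = 0
                · rw [if_pos h0, zero_add, h0, sup_eq_right.mpr hmpos.le]
                · rw [if_neg h0, sub_add_cancel, sup_eq_left.mpr (hmle i h0)]
              rw [Finset.sup'_add X a' m hX]
              calc X.sup' hX a = X.sup' hX a ⊔ m :=
                    (sup_eq_left.mpr (le_trans (hmle j hjne) (Finset.le_sup' a hjX))).symm
                _ = X.sup' hX (fun i => a i ⊔ m) := (sup'_sup_const X hX a m).symm
                _ = X.sup' hX (fun i => a' i + m) := by
                    apply Finset.sup'_congr hX rfl; intro i _; exact (heq i).symm
          · rw [dif_neg hX, dif_neg hX]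
            have : X = ∅ := Finset.not_nonempty_iff_eq_empty.mp hX
            rw [stepFn, if_pos (by simp [this])]
            ring
        rw [key, hc'X]
        have hZmem : Z ∈ Finset.univ.filter (fun W => W ≠ Finset.univ) := by
          simp [hZne]
        simp only [add_mul, Finset.sum_add_distrib]
        congr 1
        rw [Finset.sum_eq_single_of_mem Z hZmem]
        · rw [if_pos rfl]
        · intro b _ hb
          rw [if_neg hb, zero_mul]
    · exact ih a ha (le_of_not_gt fun h => hS (Finset.card_pos.mp (by omega)))

theorem max_is_normal {n : ℕ} (a : Fin n → ℝ) (ha : ∀ i, 0 ≤ a i) :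
    IsNormal (fun X : Finset (Fin n) => if hX : X.Nonempty then X.sup' hX a else 0) := by
  exact max_is_normal_aux (Finset.univ.filter (fun i => a i ≠ 0)).card a ha le_rfl
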